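/- arXiv:2002.00650 — 4 statements merged into one kernel-verified Lean document; each statement's English description precedes it below -/
import Mathlib

section
/- Define hyperharmonic numbers by H_1^(n) = Σ_{k=1}^n 1/k and H_r^(n) = Σ_{k=1}^n H_{r-1}^(k)/k for r ≥ 2. Then for all r ≥ 1 and n ≥ 1, H_r^(n) = Σ_{k=1}^n binom(n,k) (−1)^{k+1} / k^r. -/
open Finset

/-- Hockey-stick style identity: `∑_{m=k}^n C(m,k)/m = C(n,k)/k` for `k ≥ 1`. -/
lemma hh_sum_choose_div (k : ℕ) (hk : 1 ≤ k) :
    ∀ n : ℕ, ∑ m ∈ Icc k n, (m.choose k : ℝ) / m = (n.choose k : ℝ) / k := by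
  intro n
  induction n with
  | zero =>
    rw [Nat.choose_eq_zero_of_lt hk, Finset.Icc_eq_empty (by omega)]
    simp
  | succ n ih =>
    by_cases h : k ≤ n + 1
    · rw [Finset.sum_Icc_succ_top h, ih]
      have hid := Nat.choose_mul_succ_eq n k
      have hk0 : (k : ℝ) ≠ 0 := by positivity
      have hn0 : ((n : ℝ) + 1) ≠ 0 := by positivity
      have hcast : ((n.choose k : ℝ)) * (n + 1) = ((n + 1).choose k : ℝ) * ((n + 1) - k) := by
        have h2 : ((n.choose k * (n + 1) : ℕ) : ℝ) = (((n + 1).choose k * (n + 1 - k) : ℕ) : ℝ) := by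
          exact_mod_cast congrArg (Nat.cast (R := ℝ)) hid
        push_cast [Nat.cast_sub h] at h2
        linarith [h2]
      push_cast
      field_simp
      ring_nf
      ring_nf at hcast
      nlinarith [hcast]
    · have hlt : n + 1 < k := by omega
      rw [Nat.choose_eq_zero_of_lt hlt, Finset.Icc_eq_empty (by omega)]
      simp

/-- Alternating sum of binomial coefficients from `k = 1`. -/
lemma hh_alt_sum (m : ℕ) (hm : 1 ≤ m) :
    ∑ k ∈ Icc 1 m, (m.choose k : ℝ) * (-1) ^ (k + 1) = 1 := by
  have h0 : ∑ i ∈ range (m + 1), ((-1 : ℝ)) ^ i * (m.choose i : ℝ) = 0 := by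
    have := Int.alternating_sum_range_choose (n := m)
    rw [if_neg (by omega)] at this
    exact_mod_cast this
  have hins : range (m + 1) = insert 0 (Icc 1 m) := by
    ext x; simp [Finset.mem_Icc, Finset.mem_range]; omega
  rw [hins, Finset.sum_insert (by simp)] at h0
  simp only [pow_zero, one_mul, Nat.choose_zero_right, Nat.cast_one] at h0
  have : ∑ k ∈ Icc 1 m, ((-1 : ℝ)) ^ k * (m.choose k : ℝ) = -1 := by linarith
  calc ∑ k ∈ Icc 1 m, (m.choose k : ℝ) * (-1) ^ (k + 1)
      = -∑ k ∈ Icc 1 m, ((-1 : ℝ)) ^ k * (m.choose k : ℝ) := by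
        rw [← Finset.sum_neg_distrib]
        exact Finset.sum_congr rfl fun k _ => by ring
    _ = 1 := by rw [this]; ring

/-- Key step: averaging the alternating sums gives the next exponent. -/
lemma hh_key (r n : ℕ) :
    ∑ m ∈ Icc 1 n, (∑ k ∈ Icc 1 m, (m.choose k : ℝ) * (-1) ^ (k + 1) / (k : ℝ) ^ r) / m
      = ∑ k ∈ Icc 1 n, (n.choose k : ℝ) * (-1) ^ (k + 1) / (k : ℝ) ^ (r + 1) := by
  have h1 : ∑ m ∈ Icc 1 n, (∑ k ∈ Icc 1 m, (m.choose k : ℝ) * (-1) ^ (k + 1) / (k : ℝ) ^ r) / m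
      = ∑ m ∈ Icc 1 n, ∑ k ∈ Icc 1 m,
          (m.choose k : ℝ) * (-1) ^ (k + 1) / (k : ℝ) ^ r / m := by
    exact Finset.sum_congr rfl fun m _ => Finset.sum_div _ _ _
  rw [h1]
  rw [Finset.sum_comm' (s := Icc 1 n) (t := fun m => Icc 1 m) (t' := Icc 1 n)
    (s' := fun k => Icc k n) (by intro m k; simp [Finset.mem_Icc]; omega)]
  refine Finset.sum_congr rfl fun k hk => ?_
  simp only [Finset.mem_Icc] at hk
  have hk1 : 1 ≤ k := hk.1
  have hstep : ∑ m ∈ Icc k n, (m.choose k : ℝ) * (-1) ^ (k + 1) / (k : ℝ) ^ r / m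
      = ((-1 : ℝ)) ^ (k + 1) / (k : ℝ) ^ r * ∑ m ∈ Icc k n, (m.choose k : ℝ) / m := by
    rw [Finset.mul_sum]
    exact Finset.sum_congr rfl fun m _ => by ring
  rw [hstep, hh_sum_choose_div k hk1 n]
  have hk0 : (k : ℝ) ≠ 0 := by positivity
  field_simp
  ring

/-- Hyperharmonic numbers `H_r^(n)` (defined by `H_1^(n) = ∑_{k=1}^n 1/k`,
`H_r^(n) = ∑_{k=1}^n H_{r-1}^(k)/k`) satisfy
`H_r^(n) = ∑_{k=1}^n C(n,k) (−1)^{k+1} / k^r` for all `r, n ≥ 1`. -/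
theorem hyperharmonic_alternating_sum
    (H : ℕ → ℕ → ℝ)
    (hH1 : ∀ n : ℕ, H 1 n = ∑ k ∈ Icc 1 n, (1 : ℝ) / k)
    (hHr : ∀ r : ℕ, 2 ≤ r → ∀ n : ℕ, H r n = ∑ k ∈ Icc 1 n, H (r - 1) k / k) :
    ∀ r : ℕ, 1 ≤ r → ∀ n : ℕ, 1 ≤ n →
      H r n = ∑ k ∈ Icc 1 n, (n.choose k : ℝ) * (-1) ^ (k + 1) / (k : ℝ) ^ r := by
  intro r hr
  induction r, hr using Nat.le_induction with
  | base =>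
    intro n hn
    rw [hH1 n]
    have := hh_key 0 n
    simp only [pow_zero, div_one] at this
    rw [← this]
    refine Finset.sum_congr rfl fun m hm => ?_
    simp only [Finset.mem_Icc] at hm
    rw [hh_alt_sum m hm.1]
  | succ r hr ih =>
    intro n hn
    rw [hHr (r + 1) (by omega) n]
    simp only [Nat.add_sub_cancel]
    rw [← hh_key r n]
    refine Finset.sum_congr rfl fun m hm => ?_
    simp only [Finset.mem_Icc] at hm
    rw [ih m hm.1]
end

section
/- Let H_r^(n) be the hyperharmonic numbers defined by H_1^(n) = Σ_{k=1}^n 1/k and H_r^(n) = Σ_{k=1}^n H_{r-1}^(k)/k for r ≥ 2. Then for every fixed r ≥ 1, r!·H_r^(n) / (ln n)^r → 1 as n → ∞. -/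
open Finset Filter Topology

lemma L1 (m : ℕ) {a c : ℝ} (hc : 0 ≤ c) (hca : c ≤ a) :
    a ^ (m + 1) - c ^ (m + 1) ≤ (m + 1) * a ^ m * (a - c) := by
  induction m with
  | zero => simp
  | succ m ih =>
    have ha : 0 ≤ a := hc.trans hca
    have h1 : c ^ (m + 1) ≤ a ^ (m + 1) := pow_le_pow_left₀ hc hca _
    have key : a ^ (m + 2) - c ^ (m + 2)
        = a * (a ^ (m + 1) - c ^ (m + 1)) + c ^ (m + 1) * (a - c) := by ring
    rw [key]
    have h2 := mul_le_mul_of_nonneg_left ih ha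
    have h3 := mul_le_mul_of_nonneg_right h1 (sub_nonneg.2 hca)
    have h4 : a * ((↑m + 1) * a ^ m * (a - c)) = (↑m + 1) * a ^ (m + 1) * (a - c) := by ring
    rw [h4] at h2
    push_cast
    nlinarith [h2, h3]

lemma L2 (m : ℕ) {a c : ℝ} (hc : 0 ≤ c) (hca : c ≤ a) :
    (m + 1) * c ^ m * (a - c) ≤ a ^ (m + 1) - c ^ (m + 1) := by
  induction m with
  | zero => simp
  | succ m ih =>
    have ha : 0 ≤ a := hc.trans hca
    have key : a ^ (m + 2) - c ^ (m + 2)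
        = a * (a ^ (m + 1) - c ^ (m + 1)) + c ^ (m + 1) * (a - c) := by ring
    rw [key]
    have hnn : (0:ℝ) ≤ (↑m + 1) * c ^ m * (a - c) :=
      mul_nonneg (mul_nonneg (by positivity) (pow_nonneg hc m)) (sub_nonneg.2 hca)
    have h2 : c * ((↑m + 1) * c ^ m * (a - c)) ≤ a * (a ^ (m + 1) - c ^ (m + 1)) :=
      (mul_le_mul_of_nonneg_right hca hnn).trans (mul_le_mul_of_nonneg_left ih ha)
    have e : c * ((↑m + 1) * c ^ m * (a - c)) = (↑m + 1) * c ^ (m + 1) * (a - c) := by ring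
    rw [e] at h2
    push_cast
    nlinarith [h2]

lemma basel (n : ℕ) : ∑ i ∈ range n, (1 : ℝ) / (i + 1) ^ 2 ≤ 2 := by
  have key : ∀ n : ℕ, ∑ i ∈ range (n + 1), (1 : ℝ) / (i + 1) ^ 2 ≤ 2 - 1 / ((n : ℝ) + 1) := by
    intro n
    induction n with
    | zero => rw [Finset.sum_range_one]; norm_num
    | succ n ih =>
      rw [Finset.sum_range_succ]
      have h1 : (1 : ℝ) / (n + 1 + 1) ^ 2 ≤ 1 / (n + 1) - 1 / (n + 1 + 1) := by
        rw [div_sub_div _ _ (by positivity) (by positivity),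
          div_le_div_iff₀ (by positivity) (by positivity)]
        nlinarith [n.cast_nonneg (α := ℝ)]
      push_cast at ih ⊢
      linarith
  cases n with
  | zero => simp
  | succ n =>
    have h := key n
    have h2 : (0:ℝ) < 1/((n:ℝ)+1) := by positivity
    linarith

section
variable {b : ℕ → ℝ} (hb0 : b 0 = 0) (hbs : ∀ k : ℕ, b (k + 1) = b k + 1 / (k + 1))

include hb0 hbs

omit hb0 in
lemma bmono : Monotone b := by
  apply monotone_nat_of_le_succ
  intro k
  rw [hbs k]
  have : (0:ℝ) ≤ 1 / ((k:ℝ)+1) := by positivity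
  linarith

lemma bnonneg (n : ℕ) : 0 ≤ b n := hb0 ▸ bmono hbs (Nat.zero_le n)

lemma bone {n : ℕ} (hn : 1 ≤ n) : 1 ≤ b n := by
  have h1 : b 1 = 1 := by rw [hbs 0, hb0]; norm_num
  calc (1:ℝ) = b 1 := h1.symm
    _ ≤ b n := bmono hbs hn

lemma bdiff (i : ℕ) : b (i + 1) - b i = 1 / ((i : ℝ) + 1) := by rw [hbs i]; ring

lemma lemA (m n : ℕ) :
    b n ^ (m + 1) ≤ (m + 1) * ∑ i ∈ range n, b (i + 1) ^ m / (i + 1) := by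
  have tele : ∑ i ∈ range n, (b (i+1) ^ (m+1) - b i ^ (m+1)) = b n ^ (m+1) := by
    rw [Finset.sum_range_sub (fun k => b k ^ (m+1)), hb0]
    simp
  rw [← tele, Finset.mul_sum]
  apply Finset.sum_le_sum
  intro i _
  have h := L1 m (bnonneg hb0 hbs i) (bmono hbs (Nat.le_succ i))
  rw [bdiff hb0 hbs i] at h
  calc b (i+1) ^ (m+1) - b i ^ (m+1) ≤ (m+1) * b (i+1) ^ m * (1/((i:ℝ)+1)) := h
    _ = (m+1) * (b (i+1) ^ m / ((i:ℝ)+1)) := by ring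

lemma lemB (m n : ℕ) :
    ∑ i ∈ range n, b (i + 1) ^ m / (i + 1)
      ≤ b n ^ (m + 1) / (m + 1) + 2 * m * b n ^ (m - 1) := by
  have split : ∀ i ∈ range n, b (i+1) ^ m / ((i:ℝ)+1)
      = b i ^ m / ((i:ℝ)+1) + (b (i+1) ^ m - b i ^ m) / ((i:ℝ)+1) := by
    intro i _; ring
  rw [Finset.sum_congr rfl split, Finset.sum_add_distrib]
  have part1 : ∑ i ∈ range n, b i ^ m / ((i:ℝ)+1) ≤ b n ^ (m+1) / (m+1) := by
    rw [le_div_iff₀ (by positivity : (0:ℝ) < (m:ℝ)+1)]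
    have tele : ∑ i ∈ range n, (b (i+1) ^ (m+1) - b i ^ (m+1)) = b n ^ (m+1) := by
      rw [Finset.sum_range_sub (fun k => b k ^ (m+1)), hb0]
      simp
    rw [← tele, Finset.sum_mul]
    apply Finset.sum_le_sum
    intro i _
    have h := L2 m (bnonneg hb0 hbs i) (bmono hbs (Nat.le_succ i))
    rw [bdiff hb0 hbs i] at h
    calc b i ^ m / ((i:ℝ)+1) * ((m:ℝ)+1) = (m+1) * b i ^ m * (1/((i:ℝ)+1)) := by ring
      _ ≤ b (i+1) ^ (m+1) - b i ^ (m+1) := h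
  have part2 : ∑ i ∈ range n, (b (i+1) ^ m - b i ^ m) / ((i:ℝ)+1)
      ≤ 2 * m * b n ^ (m - 1) := by
    have hterm : ∀ i ∈ range n, (b (i+1) ^ m - b i ^ m) / ((i:ℝ)+1)
        ≤ (m : ℝ) * b n ^ (m - 1) * (1 / ((i:ℝ)+1) ^ 2) := by
      intro i hi
      match m with
      | 0 => simp
      | m' + 1 =>
        have h := L1 m' (bnonneg hb0 hbs i) (bmono hbs (Nat.le_succ i))
        rw [bdiff hb0 hbs i] at h
        have hin : i + 1 ≤ n := Nat.succ_le_of_lt (Finset.mem_range.1 hi)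
        have hle : b (i+1) ^ m' ≤ b n ^ m' :=
          pow_le_pow_left₀ (bnonneg hb0 hbs _) (bmono hbs hin) _
        have hpos : (0:ℝ) < (i:ℝ) + 1 := by positivity
        have h2 : b (i+1) ^ (m'+1) - b i ^ (m'+1)
            ≤ ((m':ℝ)+1) * b n ^ m' * (1/((i:ℝ)+1)) := by
          refine h.trans ?_
          have := mul_le_mul_of_nonneg_left hle (by positivity : (0:ℝ) ≤ (m':ℝ)+1)
          have h3 : (0:ℝ) ≤ 1/((i:ℝ)+1) := by positivity
          nlinarith
        calc (b (i+1) ^ (m'+1) - b i ^ (m'+1)) / ((i:ℝ)+1)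
            ≤ (((m':ℝ)+1) * b n ^ m' * (1/((i:ℝ)+1))) / ((i:ℝ)+1) := by gcongr
          _ = ((m'+1 : ℕ) : ℝ) * b n ^ ((m'+1) - 1) * (1 / ((i:ℝ)+1) ^ 2) := by
              have hm : (m' + 1) - 1 = m' := rfl
              rw [hm, ← one_div_pow]
              push_cast
              ring
    calc ∑ i ∈ range n, (b (i+1) ^ m - b i ^ m) / ((i:ℝ)+1)
        ≤ ∑ i ∈ range n, (m : ℝ) * b n ^ (m - 1) * (1 / ((i:ℝ)+1) ^ 2) :=
          Finset.sum_le_sum hterm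
      _ = (m : ℝ) * b n ^ (m - 1) * ∑ i ∈ range n, (1 : ℝ) / ((i:ℝ)+1) ^ 2 := by
          rw [Finset.mul_sum]
      _ ≤ (m : ℝ) * b n ^ (m - 1) * 2 := by
          apply mul_le_mul_of_nonneg_left (basel n)
          exact mul_nonneg (Nat.cast_nonneg m) (pow_nonneg (bnonneg hb0 hbs n) _)
      _ = 2 * m * b n ^ (m - 1) := by ring
  linarith

end

/-- For hyperharmonic numbers `H_r^(n)`, for each fixed `r ≥ 1`,
`r! · H_r^(n) / (ln n)^r → 1` as `n → ∞`. -/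
theorem hyperharmonic_asymptotics
    (H : ℕ → ℕ → ℝ)
    (hH1 : ∀ n : ℕ, H 1 n = ∑ k ∈ Icc 1 n, (1 : ℝ) / k)
    (hHr : ∀ r : ℕ, 2 ≤ r → ∀ n : ℕ, H r n = ∑ k ∈ Icc 1 n, H (r - 1) k / k)
    (r : ℕ) (hr : 1 ≤ r) :
    Tendsto (fun n : ℕ => (Nat.factorial r : ℝ) * H r n / (Real.log n) ^ r)
      atTop (nhds 1) := by
  set b : ℕ → ℝ := fun n => H 1 n with hbdef
  have hb0 : b 0 = 0 := by simp [hbdef, hH1]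
  have hbs : ∀ k : ℕ, b (k + 1) = b k + 1 / (k + 1) := by
    intro k
    simp only [hbdef, hH1]
    rw [Finset.sum_Icc_succ_top (by omega)]
    push_cast
    ring
  -- range form of the recursion
  have hrange : ∀ s : ℕ, 1 ≤ s → ∀ n : ℕ,
      H (s + 1) n = ∑ i ∈ range n, H s (i + 1) / ((i : ℝ) + 1) := by
    intro s hs n
    rw [hHr (s + 1) (by omega) n]
    have h1 : s + 1 - 1 = s := by omega
    rw [h1, ← Finset.Ico_add_one_right_eq_Icc, Finset.sum_Ico_eq_sum_range]
    apply Finset.sum_congr (by norm_num)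
    intro i _
    have : (1 : ℕ) + i = i + 1 := by omega
    rw [this]
    push_cast
    ring
  -- main sandwich
  have claim : ∀ s : ℕ, 1 ≤ s → ∃ c : ℝ, 0 ≤ c ∧ ∀ n : ℕ,
      b n ^ s ≤ (Nat.factorial s : ℝ) * H s n ∧
      (Nat.factorial s : ℝ) * H s n ≤ b n ^ s + c * b n ^ (s - 1) := by
    intro s hs
    induction s, hs using Nat.le_induction with
    | base =>
      refine ⟨0, le_refl 0, fun n => ?_⟩
      have hb : b n = H 1 n := rfl
      norm_num [hb]
    | succ s hs ih =>
      obtain ⟨c, hc, ihn⟩ := ih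
      refine ⟨((s:ℝ) + 1) * (2 * s + c * (1 + 2 * s)), by positivity, fun n => ?_⟩
      have hfac : ((s+1).factorial : ℝ) = ((s:ℝ)+1) * (s.factorial : ℝ) := by
        rw [Nat.factorial_succ]; push_cast; ring
      have hsum := hrange s hs n
      rcases Nat.eq_zero_or_pos n with hn0 | hn1
      · subst hn0
        have hH0 : H (s+1) 0 = 0 := by rw [hsum]; simp
        rw [hH0, hb0]
        constructor
        · rw [zero_pow (by omega : s + 1 ≠ 0)]
          simp
        · rw [zero_pow (by omega : s + 1 ≠ 0), Nat.add_sub_cancel,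
            zero_pow (by omega : s ≠ 0)]
          simp
      · -- n ≥ 1
        have hBone : (1:ℝ) ≤ b n := bone hb0 hbs hn1
        have hB0 : (0:ℝ) ≤ b n := by linarith
        constructor
        · -- lower bound
          calc b n ^ (s + 1)
              ≤ ((s:ℝ) + 1) * ∑ i ∈ range n, b (i+1) ^ s / ((i:ℝ)+1) := lemA hb0 hbs s n
            _ ≤ ((s:ℝ) + 1) * ∑ i ∈ range n, ((s.factorial : ℝ) * H s (i+1)) / ((i:ℝ)+1) := by
                apply mul_le_mul_of_nonneg_left _ (by positivity)
                apply Finset.sum_le_sum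
                intro i _
                apply div_le_div_of_nonneg_right (ihn (i+1)).1 (by positivity)
            _ = ((s+1).factorial : ℝ) * H (s+1) n := by
                rw [hsum, hfac, Finset.mul_sum, Finset.mul_sum]
                apply Finset.sum_congr rfl
                intro i _
                ring
        · -- upper bound
          have i1 := lemB hb0 hbs s n
          have i2 := lemB hb0 hbs (s-1) n
          have hs1 : s - 1 + 1 = s := by omega
          rw [hs1] at i2
          have e1 : b n ^ (s - 1) ≤ b n ^ s := pow_le_pow_right₀ hBone (by omega)
          have e2 : b n ^ (s - 1 - 1) ≤ b n ^ s := pow_le_pow_right₀ hBone (by omega)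
          have e3 : b n ^ s / (((s-1 : ℕ):ℝ) + 1) ≤ b n ^ s := by
            apply div_le_self (by positivity) (by push_cast; linarith [Nat.cast_nonneg (α := ℝ) (s-1)])
          have e4 : ((s - 1 : ℕ):ℝ) ≤ (s:ℝ) := by
            exact_mod_cast Nat.cast_le.mpr (Nat.sub_le s 1)
          have key : ∑ i ∈ range n, b (i+1) ^ s / ((i:ℝ)+1)
                + c * ∑ i ∈ range n, b (i+1) ^ (s-1) / ((i:ℝ)+1)
              ≤ b n ^ (s+1) / ((s:ℝ)+1) + (2*(s:ℝ) + c*(1+2*(s:ℝ))) * b n ^ s := by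
            have i2' : c * ∑ i ∈ range n, b (i+1) ^ (s-1) / ((i:ℝ)+1)
                ≤ c * (b n ^ s / (((s-1:ℕ):ℝ)+1) + 2*((s-1:ℕ):ℝ) * b n ^ (s-1-1)) :=
              mul_le_mul_of_nonneg_left i2 hc
            have i2'' : c * (b n ^ s / (((s-1:ℕ):ℝ)+1) + 2*((s-1:ℕ):ℝ) * b n ^ (s-1-1))
                ≤ c * ((1 + 2*(s:ℝ)) * b n ^ s) := by
              apply mul_le_mul_of_nonneg_left _ hc
              have h5 : 2*((s-1:ℕ):ℝ) * b n ^ (s-1-1) ≤ 2*(s:ℝ) * b n ^ s := by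
                apply mul_le_mul (by linarith) e2 (by positivity) (by positivity)
              linarith
            have h6 : 2*(s:ℝ) * b n ^ (s-1) ≤ 2*(s:ℝ) * b n ^ s := by
              apply mul_le_mul_of_nonneg_left e1 (by positivity)
            linarith
          calc ((s+1).factorial : ℝ) * H (s+1) n
              = ((s:ℝ)+1) * ∑ i ∈ range n, ((s.factorial : ℝ) * H s (i+1)) / ((i:ℝ)+1) := by
                rw [hsum, hfac, Finset.mul_sum, Finset.mul_sum]
                apply Finset.sum_congr rfl
                intro i _
                ring
            _ ≤ ((s:ℝ)+1) * (∑ i ∈ range n, b (i+1) ^ s / ((i:ℝ)+1)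
                  + c * ∑ i ∈ range n, b (i+1) ^ (s-1) / ((i:ℝ)+1)) := by
                apply mul_le_mul_of_nonneg_left _ (by positivity)
                rw [Finset.mul_sum, ← Finset.sum_add_distrib]
                apply Finset.sum_le_sum
                intro i _
                have := (ihn (i+1)).2
                calc ((s.factorial : ℝ) * H s (i+1)) / ((i:ℝ)+1)
                    ≤ (b (i+1) ^ s + c * b (i+1) ^ (s-1)) / ((i:ℝ)+1) := by
                      apply div_le_div_of_nonneg_right this (by positivity)
                  _ = b (i+1) ^ s / ((i:ℝ)+1) + c * (b (i+1) ^ (s-1) / ((i:ℝ)+1)) := by ring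
            _ ≤ ((s:ℝ)+1) * (b n ^ (s+1) / ((s:ℝ)+1) + (2*(s:ℝ) + c*(1+2*(s:ℝ))) * b n ^ s) := by
                apply mul_le_mul_of_nonneg_left key (by positivity)
            _ = b n ^ (s+1) + (((s:ℝ)+1) * (2*(s:ℝ) + c*(1+2*(s:ℝ)))) * b n ^ s := by
                field_simp
            _ = b n ^ (s+1) + (((s:ℝ) + 1) * (2 * s + c * (1 + 2 * s))) * b n ^ ((s+1) - 1) := by
                rw [Nat.add_sub_cancel]
  obtain ⟨c, hc, hbnd⟩ := claim r hr
  have hbh : ∀ n : ℕ, b n = (harmonic n : ℝ) := by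
    intro n
    show H 1 n = _
    rw [hH1 n, harmonic_eq_sum_Icc]
    push_cast
    simp [one_div]
  have hlog : Tendsto (fun n : ℕ => Real.log n) atTop atTop :=
    Real.tendsto_log_atTop.comp tendsto_natCast_atTop_atTop
  have hq : Tendsto (fun n : ℕ => ((harmonic n : ℝ) - Real.log n) / Real.log n)
      atTop (𝓝 0) := Real.tendsto_harmonic_sub_log.div_atTop hlog
  have hblog : Tendsto (fun n : ℕ => b n / Real.log n) atTop (𝓝 1) := by
    have h1 : Tendsto (fun n : ℕ => 1 + ((harmonic n : ℝ) - Real.log n) / Real.log n)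
        atTop (𝓝 (1 + 0)) := tendsto_const_nhds.add hq
    rw [add_zero] at h1
    refine Tendsto.congr' ?_ h1
    filter_upwards [eventually_ge_atTop 2] with n hn
    have hl : 0 < Real.log n := Real.log_pos (by exact_mod_cast Nat.one_lt_cast.mpr (by omega))
    rw [hbh n]
    field_simp
    ring
  have hinv : Tendsto (fun n : ℕ => (Real.log n)⁻¹) atTop (𝓝 0) :=
    tendsto_inv_atTop_zero.comp hlog
  have glim : Tendsto (fun n : ℕ => (b n / Real.log n) ^ r) atTop (𝓝 1) := by
    simpa using hblog.pow r
  have t1 : Tendsto (fun n : ℕ => (b n / Real.log n) ^ (r-1) * (Real.log n)⁻¹)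
      atTop (𝓝 ((1:ℝ) ^ (r-1) * 0)) := (hblog.pow (r-1)).mul hinv
  rw [one_pow, mul_zero] at t1
  have hlim : Tendsto (fun n : ℕ => (b n / Real.log n) ^ r
      + c * ((b n / Real.log n) ^ (r-1) * (Real.log n)⁻¹)) atTop (𝓝 (1 + c * 0)) :=
    glim.add (t1.const_mul c)
  rw [mul_zero, add_zero] at hlim
  apply tendsto_of_tendsto_of_tendsto_of_le_of_le' glim hlim
  · filter_upwards [eventually_ge_atTop 2] with n hn
    have hl : 0 < Real.log n := Real.log_pos (by exact_mod_cast Nat.one_lt_cast.mpr (by omega))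
    rw [div_pow]
    exact div_le_div_of_nonneg_right (hbnd n).1 (pow_pos hl r).le |>.trans_eq rfl
  · filter_upwards [eventually_ge_atTop 2] with n hn
    have hl : 0 < Real.log n := Real.log_pos (by exact_mod_cast Nat.one_lt_cast.mpr (by omega))
    have hLr : (Real.log n) ^ r = (Real.log n) ^ (r-1) * Real.log n := by
      conv_lhs => rw [← Nat.succ_pred_eq_of_pos hr]
      rw [pow_succ, Nat.pred_eq_sub_one]
    calc (Nat.factorial r : ℝ) * H r n / (Real.log n) ^ r
        ≤ (b n ^ r + c * b n ^ (r-1)) / (Real.log n) ^ r :=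
          div_le_div_of_nonneg_right (hbnd n).2 (pow_pos hl r).le
      _ = (b n / Real.log n) ^ r + c * ((b n / Real.log n) ^ (r-1) * (Real.log n)⁻¹) := by
          rw [div_pow, div_pow, hLr]
          field_simp
end

section
/- For a fixed integer r ≥ 0 and a Borel set B ⊆ R that is bounded from below, let P^(n) = ∫_B (x+ln n)^r e^{-x}/(n·r!) · 1{x ≥ −ln n} dx be the probability that ψ(Z_r^(n)) ∈ B, where Z_r^(n) ~ Gamma(r+1, rate 1/n) and ψ(x) = x/n − ln n. Then n·(ln n)^{-r}·P^(n) → (1/r!) ∫_B e^{-x} dx as n → ∞. -/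
open MeasureTheory Filter Set

lemma aux_tendsto (r : ℕ) :
    Tendsto (fun x : ℝ => (1 + |x|) ^ r * Real.exp (-((1/2) * x))) atTop (nhds 0) := by
  have h := tendsto_rpow_mul_exp_neg_mul_atTop_nhds_zero (r : ℝ) (1/2) (by norm_num)
  have h2 : Tendsto (fun x : ℝ => 1 + x) atTop atTop :=
    tendsto_atTop_add_const_left _ _ tendsto_id
  have h3 := (h.comp h2).mul_const (Real.exp (1/2))
  rw [zero_mul] at h3
  refine h3.congr' ?_
  filter_upwards [eventually_ge_atTop (0:ℝ)] with x hx
  simp only [Function.comp]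
  rw [abs_of_nonneg hx, Real.rpow_natCast, mul_assoc, ← Real.exp_add]
  congr 2
  ring

lemma aux_integrable (r : ℕ) (m : ℝ) :
    IntegrableOn (fun x => (1 + |x|) ^ r * Real.exp (-x)) (Ici m) := by
  rw [integrableOn_Ici_iff_integrableOn_Ioi]
  apply integrable_of_isBigO_exp_neg (one_half_pos)
    (Continuous.continuousOn (by continuity))
  apply Asymptotics.isBigO_of_div_tendsto_nhds (c := 0)
    (by filter_upwards with x hx; exact absurd hx (Real.exp_ne_zero _))
  refine (aux_tendsto r).congr' ?_
  filter_upwards with x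
  simp only [Pi.div_apply]
  rw [mul_div_assoc, ← Real.exp_sub]
  congr 2
  ring

/-- With `P^(n) = ∫_B (x+ln n)^r e^{-x}/(n·r!) · 1{x ≥ −ln n} dx` (the probability
that `ψ(Z_r^(n)) ∈ B` for `Z_r^(n) ~ Gamma(r+1, rate 1/n)` and a Borel set `B`
bounded from below), one has `n·(ln n)^{-r}·P^(n) → (1/r!) ∫_B e^{-x} dx`. -/
theorem limit_single_probability
    (r : ℕ) (B : Set ℝ) (hB : MeasurableSet B) (hBbd : BddBelow B) :
    Tendsto (fun n : ℕ =>
        (n : ℝ) / (Real.log n) ^ r *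
          ∫ x in B, (if -Real.log n ≤ x then
            (x + Real.log n) ^ r * Real.exp (-x) / (n * (Nat.factorial r : ℝ))
          else 0))
      atTop
      (nhds ((1 / (Nat.factorial r : ℝ)) * ∫ x in B, Real.exp (-x))) := by
  obtain ⟨m, hm⟩ := hBbd
  have hlogtop : Tendsto (fun n : ℕ => Real.log n) atTop atTop :=
    Real.tendsto_log_atTop.comp tendsto_natCast_atTop_atTop
  have hlog1 : ∀ᶠ n : ℕ in atTop, 1 ≤ Real.log n := hlogtop.eventually_ge_atTop 1
  set G : ℕ → ℝ → ℝ := fun n x =>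
    if -Real.log n ≤ x then (1 + x / Real.log n) ^ r * Real.exp (-x) else 0 with hGdef
  have key : Tendsto (fun n => ∫ x in B, G n x) atTop (nhds (∫ x in B, Real.exp (-x))) := by
    apply tendsto_integral_filter_of_dominated_convergence
      (fun x => (1 + |x|) ^ r * Real.exp (-x))
    · filter_upwards with n
      refine (Measurable.ite ?_ (by fun_prop) measurable_const).aestronglyMeasurable
      exact measurableSet_Ici
    · filter_upwards [hlog1] with n hn
      filter_upwards with x
      simp only [hGdef]
      split_ifs with h
      · rw [Real.norm_eq_abs, abs_mul, abs_pow, Real.abs_exp]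
        have hb : |1 + x / Real.log n| ≤ 1 + |x| := by
          calc |1 + x / Real.log n| ≤ |(1:ℝ)| + |x / Real.log n| := abs_add_le _ _
          _ = 1 + |x| / |Real.log n| := by rw [abs_one, abs_div]
          _ ≤ 1 + |x| := by
              have h1 : 1 ≤ |Real.log n| := by
                rw [abs_of_nonneg (by linarith)]; exact hn
              have := div_le_self (abs_nonneg x) h1
              linarith
        exact mul_le_mul_of_nonneg_right (pow_le_pow_left₀ (abs_nonneg _) hb r)
          (Real.exp_nonneg _)
      · simp only [norm_zero]
        positivity
    · exact (aux_integrable r m).mono_set fun x hx => hm hx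
    · filter_upwards with x
      have h1 : Tendsto (fun n : ℕ => x / Real.log n) atTop (nhds 0) :=
        Tendsto.div_atTop tendsto_const_nhds hlogtop
      have h2 : Tendsto (fun n : ℕ => (1 + x / Real.log n) ^ r * Real.exp (-x)) atTop
          (nhds (Real.exp (-x))) := by
        have := (((tendsto_const_nhds : Tendsto (fun _ : ℕ => (1:ℝ)) atTop (nhds 1)).add h1).pow r).mul_const (Real.exp (-x))
        simpa using this
      apply h2.congr'
      filter_upwards [hlogtop.eventually_ge_atTop (-x)] with n hn
      simp only [hGdef]
      rw [if_pos (by linarith)]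
  have key2 := key.const_mul (1 / (r.factorial : ℝ))
  apply key2.congr'
  filter_upwards [hlog1, eventually_ge_atTop 1] with n hlogn hn1
  have hn0 : (0:ℝ) < n := by exact_mod_cast hn1
  have hlne : Real.log n ≠ 0 := by linarith
  have hfac : (r.factorial : ℝ) ≠ 0 := by positivity
  rw [← integral_const_mul, ← integral_const_mul]
  refine setIntegral_congr_fun hB fun x _ => ?_
  simp only [hGdef]
  split_ifs with h
  · have : (1 + x / Real.log n) = (x + Real.log n) / Real.log n := by
      field_simp
      ring
    rw [this, div_pow]
    field_simp
  · simp
end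

section
/- For integers 0 ≤ r_1 < r_2 and Borel sets B_{r_1}, B_{r_2} ⊆ R bounded from below, let P^(n) = P{ψ(Z_{r_1}^(n)) ∈ B_{r_1}, ψ(Z_{r_2}^(n)) ∈ B_{r_2}}, where (Z_{r_1}^(n), Z_{r_2}^(n)) has the joint gamma structure with increments Exp(1/n) and ψ(x) = x/n − ln n. Then n·(ln n)^{-r_1-r_2}·P^(n) → 0 as n → ∞. -/
open MeasureTheory Filter

/-- For `0 ≤ r₁ < r₂`, Borel sets `B₁, B₂` bounded from below, and
`P^(n) = P{ψ(Z_{r₁}^(n)) ∈ B₁, ψ(Z_{r₂}^(n)) ∈ B₂}` (written via the joint density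
of the centered gamma pair), one has `n·(ln n)^{-r₁-r₂}·P^(n) → 0`. -/
theorem limit_pair_probability
    (r₁ r₂ : ℕ) (hr : r₁ < r₂)
    (B₁ B₂ : Set ℝ) (hB₁ : MeasurableSet B₁) (hB₂ : MeasurableSet B₂)
    (hB₁bd : BddBelow B₁) (hB₂bd : BddBelow B₂) :
    Tendsto (fun n : ℕ =>
        (n : ℝ) / (Real.log n) ^ (r₁ + r₂) *
          ∫ x in B₁, ∫ y in B₂,
            (if -Real.log n ≤ x ∧ x ≤ y then
              (x + Real.log n) ^ r₁ * (y - x) ^ (r₂ - r₁ - 1) * Real.exp (-y)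
                / (n * (Nat.factorial r₁ : ℝ) * (Nat.factorial (r₂ - r₁ - 1) : ℝ))
            else 0))
      atTop (nhds 0) := by
  obtain ⟨c₁, hc₁⟩ := hB₁bd
  obtain ⟨c₂, hc₂⟩ := hB₂bd
  set k := r₂ - r₁ - 1 with hk
  set c : ℝ := min (min c₁ c₂) 0 with hcdef
  have hc0 : c ≤ 0 := min_le_right _ _
  have hB₁c : B₁ ⊆ Set.Ici c := fun x hx =>
    le_trans (le_trans (min_le_left _ _) (min_le_left _ _)) (hc₁ hx)
  have hB₂c : B₂ ⊆ Set.Ici c := fun x hx =>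
    le_trans (le_trans (min_le_left _ _) (min_le_right _ _)) (hc₂ hx)
  set g₁ : ℝ → ℝ := fun x => Real.exp (-(2⁻¹ : ℝ) * x) with hg₁def
  set g₂ : ℝ → ℝ := fun y => (y - c + 1) ^ r₁ * (y - c) ^ k * Real.exp (-(2⁻¹ : ℝ) * y)
    with hg₂def
  have hg₁int : IntegrableOn g₁ (Set.Ici c) := by
    rw [integrableOn_Ici_iff_integrableOn_Ioi]
    exact exp_neg_integrableOn_Ioi c (by norm_num)
  have hg₂int : IntegrableOn g₂ (Set.Ici c) := by
    rw [integrableOn_Ici_iff_integrableOn_Ioi]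
    apply integrable_of_isBigO_exp_neg (b := 4⁻¹) (by norm_num)
    · exact (by fun_prop : Continuous g₂).continuousOn
    · apply Asymptotics.IsLittleO.isBigO
      apply Asymptotics.isLittleO_of_tendsto
        (fun x hx => absurd hx (Real.exp_ne_zero _))
      set p : Polynomial ℝ := (Polynomial.X - Polynomial.C c + 1) ^ r₁ *
        (Polynomial.X - Polynomial.C c) ^ k with hpdef
      have hsimp : (fun y : ℝ => g₂ y / Real.exp (-4⁻¹ * y)) =
          fun y : ℝ => p.eval y / Real.exp (4⁻¹ * y) := by
        funext y
        rw [hg₂def, hpdef]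
        simp only [Polynomial.eval_mul, Polynomial.eval_pow, Polynomial.eval_add,
          Polynomial.eval_sub, Polynomial.eval_X, Polynomial.eval_C, Polynomial.eval_one]
        rw [mul_div_assoc, ← Real.exp_sub, mul_div_assoc, div_eq_mul_inv (b := Real.exp _),
          ← Real.exp_neg]
        ring_nf
      rw [hsimp]
      have h4 : Tendsto (fun y : ℝ => 4⁻¹ * y) atTop atTop :=
        Tendsto.const_mul_atTop (by norm_num) tendsto_id
      have := (Polynomial.tendsto_div_exp_atTop
        (p.comp (Polynomial.C 4 * Polynomial.X))).comp h4
      convert this using 2 with y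
      simp only [Function.comp_apply, Polynomial.eval_comp, Polynomial.eval_mul,
        Polynomial.eval_C, Polynomial.eval_X]
      norm_num
      have h : (4:ℝ) * (1/4 * y) = y := by ring
      rw [h]
  set C₁ : ℝ := ∫ x in Set.Ici c, g₁ x with hC₁def
  set C₂ : ℝ := ∫ y in Set.Ici c, g₂ y with hC₂def
  have hg₁nonneg : ∀ x : ℝ, 0 ≤ g₁ x := fun x => (Real.exp_pos _).le
  have hg₂nonneg : ∀ y ∈ Set.Ici c, 0 ≤ g₂ y := by
    intro y hy
    simp only [Set.mem_Ici] at hy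
    exact mul_nonneg (mul_nonneg (pow_nonneg (by linarith) _)
      (pow_nonneg (by linarith) _)) (Real.exp_pos _).le
  have hC₁nonneg : 0 ≤ C₁ := setIntegral_nonneg measurableSet_Ici fun x _ => hg₁nonneg x
  have hC₂nonneg : 0 ≤ C₂ := setIntegral_nonneg measurableSet_Ici hg₂nonneg
  have hC₂le : ∫ y in B₂, g₂ y ≤ C₂ :=
    setIntegral_mono_set hg₂int
      ((ae_restrict_iff' measurableSet_Ici).mpr (ae_of_all _ hg₂nonneg))
      (HasSubset.Subset.eventuallyLE hB₂c)
  have hC₁le : ∫ x in B₁, g₁ x ≤ C₁ :=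
    setIntegral_mono_set hg₁int (ae_of_all _ fun x => hg₁nonneg x)
      (HasSubset.Subset.eventuallyLE hB₁c)
  have hA : (0:ℝ) < (Nat.factorial r₁ : ℝ) := by positivity
  have hBf : (0:ℝ) < (Nat.factorial k : ℝ) := by positivity
  have hfnonneg : ∀ (n : ℕ) (x y : ℝ), 0 ≤
      (if -Real.log n ≤ x ∧ x ≤ y then
        (x + Real.log n) ^ r₁ * (y - x) ^ k * Real.exp (-y)
          / (n * (Nat.factorial r₁ : ℝ) * (Nat.factorial k : ℝ))
      else 0) := by
    intro n x y
    split
    · rename_i h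
      apply div_nonneg
      · exact mul_nonneg (mul_nonneg (pow_nonneg (by linarith [h.1]) _)
          (pow_nonneg (by linarith [h.2]) _)) (Real.exp_pos _).le
      · positivity
    · exact le_refl _
  set K : ℝ := C₁ * C₂ / ((Nat.factorial r₁ : ℝ) * (Nat.factorial k : ℝ)) with hKdef
  apply squeeze_zero' (g := fun n : ℕ => K / (Real.log n) ^ r₂)
  · filter_upwards with n
    apply mul_nonneg
    · exact div_nonneg (Nat.cast_nonneg n) (pow_nonneg (Real.log_natCast_nonneg n) _)
    · exact setIntegral_nonneg hB₁ fun x _ => setIntegral_nonneg hB₂ fun y _ => hfnonneg n x y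
  · filter_upwards [eventually_ge_atTop 3] with n hn3
    set L := Real.log n with hLdef
    have hn0 : (0:ℝ) < n := by
      have : (0:ℕ) < n := by omega
      exact_mod_cast this
    have hn3' : (3:ℝ) ≤ n := by exact_mod_cast hn3
    have hL1 : 1 ≤ L := by
      rw [hLdef, Real.le_log_iff_exp_le (by linarith)]
      linarith [Real.exp_one_lt_d9]
    have hL0 : (0:ℝ) < L := by linarith
    set D : ℝ := (n : ℝ) * (Nat.factorial r₁ : ℝ) * (Nat.factorial k : ℝ) with hDdef
    have hD0 : (0:ℝ) < D := by rw [hDdef]; positivity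
    have hptwise : ∀ x ∈ B₁, ∀ y ∈ B₂,
        (if -L ≤ x ∧ x ≤ y then
          (x + L) ^ r₁ * (y - x) ^ k * Real.exp (-y) / D
        else 0) ≤ (L ^ r₁ * g₁ x / D) * g₂ y := by
      intro x hx y hy
      have hxc : c ≤ x := hB₁c hx
      have hyc : c ≤ y := hB₂c hy
      split
      · rename_i h
        obtain ⟨h1, h2⟩ := h
        rw [div_mul_eq_mul_div, div_le_div_iff₀ hD0 hD0]
        apply mul_le_mul_of_nonneg_right _ hD0.le
        have e1 : (x + L) ^ r₁ ≤ L ^ r₁ * (y - c + 1) ^ r₁ := by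
          rw [← mul_pow]
          apply pow_le_pow_left₀ (by linarith)
          nlinarith [mul_nonneg (by linarith : (0:ℝ) ≤ L - 1) (by linarith : (0:ℝ) ≤ y - c)]
        have e2 : (y - x) ^ k ≤ (y - c) ^ k :=
          pow_le_pow_left₀ (by linarith) (by linarith) k
        have e3 : Real.exp (-y) ≤ Real.exp (-(2⁻¹:ℝ) * x) * Real.exp (-(2⁻¹:ℝ) * y) := by
          rw [← Real.exp_add]
          apply Real.exp_le_exp.mpr
          linarith
        calc (x + L) ^ r₁ * (y - x) ^ k * Real.exp (-y)
            ≤ (L ^ r₁ * (y - c + 1) ^ r₁) * ((y - c) ^ k) *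
              (Real.exp (-(2⁻¹:ℝ) * x) * Real.exp (-(2⁻¹:ℝ) * y)) := by
              apply mul_le_mul (mul_le_mul e1 e2 (pow_nonneg (by linarith) _)
                (mul_nonneg (pow_nonneg hL0.le _) (pow_nonneg (by linarith) _))) e3
                (Real.exp_pos _).le
              exact mul_nonneg (mul_nonneg (pow_nonneg hL0.le _)
                (pow_nonneg (by linarith) _)) (pow_nonneg (by linarith) _)
          _ = Real.exp (-(2⁻¹:ℝ) * x) *
              ((y - c + 1) ^ r₁ * (y - c) ^ k * Real.exp (-(2⁻¹:ℝ) * y)) * L ^ r₁ := by ring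
          _ = g₁ x * g₂ y * L ^ r₁ := by rw [hg₁def, hg₂def]
          _ = L ^ r₁ * g₁ x * g₂ y := by ring
      · exact mul_nonneg (div_nonneg (mul_nonneg (pow_nonneg hL0.le _) (hg₁nonneg x)) hD0.le)
          (hg₂nonneg y hyc)
    have hinner : ∀ x ∈ B₁,
        (∫ y in B₂, (if -L ≤ x ∧ x ≤ y then
          (x + L) ^ r₁ * (y - x) ^ k * Real.exp (-y) / D else 0))
        ≤ (L ^ r₁ * C₂ / D) * g₁ x := by
      intro x hx
      calc (∫ y in B₂, (if -L ≤ x ∧ x ≤ y then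
            (x + L) ^ r₁ * (y - x) ^ k * Real.exp (-y) / D else 0))
          ≤ ∫ y in B₂, (L ^ r₁ * g₁ x / D) * g₂ y := by
            apply integral_mono_of_nonneg
            · exact ae_of_all _ fun y => hfnonneg n x y
            · exact (hg₂int.mono_set hB₂c).const_mul _
            · exact (ae_restrict_iff' hB₂).mpr (ae_of_all _ fun y hy => hptwise x hx y hy)
        _ = (L ^ r₁ * g₁ x / D) * ∫ y in B₂, g₂ y := integral_const_mul _ _
        _ ≤ (L ^ r₁ * g₁ x / D) * C₂ := by
            apply mul_le_mul_of_nonneg_left hC₂le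
            exact div_nonneg (mul_nonneg (pow_nonneg hL0.le _) (hg₁nonneg x)) hD0.le
        _ = (L ^ r₁ * C₂ / D) * g₁ x := by ring
    have houter : (∫ x in B₁, ∫ y in B₂, (if -L ≤ x ∧ x ≤ y then
          (x + L) ^ r₁ * (y - x) ^ k * Real.exp (-y) / D else 0))
        ≤ (L ^ r₁ * C₂ / D) * C₁ := by
      calc (∫ x in B₁, ∫ y in B₂, (if -L ≤ x ∧ x ≤ y then
            (x + L) ^ r₁ * (y - x) ^ k * Real.exp (-y) / D else 0))
          ≤ ∫ x in B₁, (L ^ r₁ * C₂ / D) * g₁ x := by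
            apply integral_mono_of_nonneg
            · exact ae_of_all _ fun x => integral_nonneg fun y => hfnonneg n x y
            · exact (hg₁int.mono_set hB₁c).const_mul _
            · exact (ae_restrict_iff' hB₁).mpr (ae_of_all _ fun x hx => hinner x hx)
        _ = (L ^ r₁ * C₂ / D) * ∫ x in B₁, g₁ x := integral_const_mul _ _
        _ ≤ (L ^ r₁ * C₂ / D) * C₁ := by
            apply mul_le_mul_of_nonneg_left hC₁le
            exact div_nonneg (mul_nonneg (pow_nonneg hL0.le _) hC₂nonneg) hD0.le
    calc (n : ℝ) / L ^ (r₁ + r₂) *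
          ∫ x in B₁, ∫ y in B₂, (if -L ≤ x ∧ x ≤ y then
            (x + L) ^ r₁ * (y - x) ^ k * Real.exp (-y) / D else 0)
        ≤ (n : ℝ) / L ^ (r₁ + r₂) * ((L ^ r₁ * C₂ / D) * C₁) := by
          apply mul_le_mul_of_nonneg_left houter
          exact div_nonneg hn0.le (pow_nonneg hL0.le _)
      _ = K / L ^ r₂ := by
          rw [hKdef, hDdef, pow_add]
          field_simp
  · apply Tendsto.div_atTop tendsto_const_nhds
    exact (tendsto_pow_atTop (by omega : r₂ ≠ 0)).comp
      (Real.tendsto_log_atTop.comp tendsto_natCast_atTop_atTop)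
end
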